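/- Let K₁ ≥ 1 be a real number and let Δt be a real number with 0 < Δt < (2 + K₁)⁻¹. Then for every nonnegative integer r, Γ(r + 1 + Δt⁻¹)/Γ(r + 1 + Δt⁻¹ − K₁) ≤ ((r + 1)Δt + 1)^{K₁} · Δt^{−K₁}. -/

import Mathlib

open Real Set

theorem gamma_ratio_shift_le (K₁ Δt : ℝ) (hK₁ : 1 ≤ K₁)
    (hΔt0 : 0 < Δt) (hΔt : Δt < (2 + K₁)⁻¹) :
    ∀ r : ℕ,
      Real.Gamma ((r : ℝ) + 1 + Δt⁻¹) / Real.Gamma ((r : ℝ) + 1 + Δt⁻¹ - K₁) ≤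
        (((r : ℝ) + 1) * Δt + 1) ^ K₁ * Δt ^ (-K₁) := by
  intro r
  have h2K : (0:ℝ) < 2 + K₁ := by linarith
  have hinv : 2 + K₁ < Δt⁻¹ := by
    rw [← inv_inv (2 + K₁)]
    exact inv_strictAnti₀ hΔt0 hΔt
  set X : ℝ := (r : ℝ) + 1 + Δt⁻¹ with hX
  have hr0 : (0:ℝ) ≤ (r : ℝ) := Nat.cast_nonneg r
  have hXK : 2 < X - K₁ := by simp only [hX]; linarith
  have hXK0 : 0 < X - K₁ := by linarith
  have hX0 : 0 < X := by linarith
  have hX1 : 0 < X + 1 := by linarith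
  have hK0 : 0 < K₁ := by linarith
  -- convexity slope inequality
  have hconv := Real.convexOn_log_Gamma
  have hslope := hconv.slope_mono_adjacent (x := X - K₁) (y := X) (z := X + 1)
    (mem_Ioi.mpr hXK0) (mem_Ioi.mpr hX1) (by linarith) (by linarith)
  have hΓ1 : Real.Gamma (X + 1) = X * Real.Gamma X := Real.Gamma_add_one hX0.ne'
  have hΓXpos := Real.Gamma_pos_of_pos hX0
  have hΓXKpos := Real.Gamma_pos_of_pos hXK0
  have hlog : Real.log (Real.Gamma X) - Real.log (Real.Gamma (X - K₁)) ≤ K₁ * Real.log X := by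
    have h1 : (Real.log (Real.Gamma X) - Real.log (Real.Gamma (X - K₁))) / K₁ ≤
        Real.log (Real.Gamma (X + 1)) - Real.log (Real.Gamma X) := by
      simpa [sub_sub_cancel] using hslope
    have h2 : Real.log (Real.Gamma (X + 1)) - Real.log (Real.Gamma X) = Real.log X := by
      rw [hΓ1, Real.log_mul hX0.ne' hΓXpos.ne']; ring
    rw [h2] at h1
    calc Real.log (Real.Gamma X) - Real.log (Real.Gamma (X - K₁))
        = K₁ * ((Real.log (Real.Gamma X) - Real.log (Real.Gamma (X - K₁))) / K₁) := by
          field_simp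
      _ ≤ K₁ * Real.log X := by
          exact mul_le_mul_of_nonneg_left h1 hK0.le
  have hmain : Real.Gamma X / Real.Gamma (X - K₁) ≤ X ^ K₁ := by
    have := Real.exp_le_exp.mpr hlog
    rw [Real.exp_sub, Real.exp_log hΓXpos, Real.exp_log hΓXKpos] at this
    rwa [Real.rpow_def_of_pos hX0, mul_comm]
  have hRHS : (((r : ℝ) + 1) * Δt + 1) ^ K₁ * Δt ^ (-K₁) = X ^ K₁ := by
    rw [Real.rpow_neg hΔt0.le, ← div_eq_mul_inv, ← Real.div_rpow (by positivity) hΔt0.le]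
    congr 1
    field_simp [hX]
    rw [hX, mul_add, mul_inv_cancel₀ hΔt0.ne']; ring
  rw [hRHS]
  exact hmain
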